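/- Let M be a closed Riemannian manifold with Sec_M ≥ −Λ², and let p, q, x ∈ M with d(p,q) > Λ⁻¹/2, d(q,x) ≥ Λ⁻¹, satisfying the almost-minimizing condition d(p,q) + d(q,x) ≤ d(p,x) + δ for some δ > 0. Then for the angle η at q between minimizing geodesics [qp] and [qx], one has (π − η)² ≤ 2 C₇⁻¹ δ, where C₇ is the uniform hinge-comparison constant depending only on Λ. -/

import Mathlib

lemma my_cosh_sub_cosh (x y : ℝ) :
    Real.cosh x - Real.cosh y = 2 * Real.sinh ((x+y)/2) * Real.sinh ((x-y)/2) := by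
  rw [Real.cosh_eq, Real.cosh_eq, Real.sinh_eq, Real.sinh_eq]
  have e1 : Real.exp ((x+y)/2) * Real.exp ((x-y)/2) = Real.exp x := by
    rw [← Real.exp_add]; ring_nf
  have e2 : Real.exp ((x+y)/2) * Real.exp (-((x-y)/2)) = Real.exp y := by
    rw [← Real.exp_add]; ring_nf
  have e3 : Real.exp (-((x+y)/2)) * Real.exp ((x-y)/2) = Real.exp (-y) := by
    rw [← Real.exp_add]; ring_nf
  have e4 : Real.exp (-((x+y)/2)) * Real.exp (-((x-y)/2)) = Real.exp (-x) := by
    rw [← Real.exp_add]; ring_nf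
  linear_combination (-e1 + e2 + e3 - e4) / 2

lemma my_sinh_le (x : ℝ) (h0 : 0 ≤ x) (h1 : x ≤ 1/2) : Real.sinh x ≤ 2 * x := by
  rw [Real.sinh_eq]
  have h2 : 1 - x ≤ Real.exp (-x) := by nlinarith [Real.add_one_le_exp (-x)]
  have h3 : Real.exp x ≤ Real.exp (1/2) := Real.exp_le_exp.2 h1
  have h4 : Real.exp (1/2) < 2 := by
    nlinarith [Real.exp_pos (1/2), Real.exp_one_lt_d9,
      (Real.exp_add (1/2) (1/2)).symm]
  have hprod : Real.exp (-x) * Real.exp x = 1 := by rw [← Real.exp_add]; simp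
  have h5 : Real.exp x - 1 ≤ x * Real.exp x := by nlinarith [Real.exp_pos x]
  nlinarith [Real.exp_pos x]

set_option maxHeartbeats 1000000 in
/-- Almost-minimizing shortcut estimate.  A closed Riemannian manifold with
`Sec ≥ −Λ²` is encoded as a compact metric space; `γ₁, γ₂` are unit-speed minimizing
geodesics from `q` to `p` and from `q` to `x` respectively, making an angle
`η ∈ [0, π]` at `q`, encoded via the Toponogov hinge comparison with the rescaled
hyperbolic plane of curvature `−Λ²`.  If `d(p,q) > Λ⁻¹/2`, `d(q,x) ≥ Λ⁻¹` and
`d(p,q) + d(q,x) ≤ d(p,x) + δ`, then `(π − η)² ≤ 2 C₇⁻¹ δ`, where `C₇ > 0` is the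
uniform hinge-comparison constant depending only on `Λ`. -/
theorem stmt_11 (Λ : ℝ) (hΛ : 1 ≤ Λ) :
    ∃ C₇ : ℝ, 0 < C₇ ∧
      ∀ (M : Type) [MetricSpace M] [CompactSpace M]
        (p q x : M) (γ₁ γ₂ : ℝ → M) (η δ : ℝ),
        0 < δ →
        Λ⁻¹ / 2 < dist p q → Λ⁻¹ ≤ dist q x →
        dist p q + dist q x ≤ dist p x + δ →
        γ₁ 0 = q → γ₂ 0 = q → γ₁ (dist q p) = p → γ₂ (dist q x) = x →
        (∀ s ∈ Set.Icc (0 : ℝ) (dist q p), ∀ t ∈ Set.Icc (0 : ℝ) (dist q p),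
          dist (γ₁ s) (γ₁ t) = |s - t|) →
        (∀ s ∈ Set.Icc (0 : ℝ) (dist q x), ∀ t ∈ Set.Icc (0 : ℝ) (dist q x),
          dist (γ₂ s) (γ₂ t) = |s - t|) →
        η ∈ Set.Icc 0 Real.pi →
        (∀ s ∈ Set.Icc (0 : ℝ) (dist q p), ∀ t ∈ Set.Icc (0 : ℝ) (dist q x),
          Real.cosh (Λ * dist (γ₁ s) (γ₂ t)) ≤
            Real.cosh (Λ * s) * Real.cosh (Λ * t) -
              Real.sinh (Λ * s) * Real.sinh (Λ * t) * Real.cos η) →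
        (Real.pi - η) ^ 2 ≤ 2 * C₇⁻¹ * δ := by
  have hΛ0 : (0:ℝ) < Λ := by linarith
  have hΛinv : (0:ℝ) < Λ⁻¹ := by positivity
  refine ⟨(100 * Λ)⁻¹, by positivity, ?_⟩
  intro M _ _ p q x γ₁ γ₂ η δ hδ0 hpq hqx halm hγ₁0 hγ₂0 hγ₁e hγ₂e hiso1 hiso2 hη hhinge
  rw [inv_inv]
  have hπ2 : Real.pi ^ 2 < 10 := by nlinarith [Real.pi_lt_d2, Real.pi_pos]
  have hθ0 : 0 ≤ Real.pi - η := by linarith [hη.2]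
  have hθπ : Real.pi - η ≤ Real.pi := by linarith [hη.1]
  by_cases hδbig : Λ⁻¹ / 2 ≤ δ
  · -- trivial case: δ is big
    have h1 : Λ * (Λ⁻¹ / 2) = 1/2 := by field_simp
    have h2 : (1:ℝ)/2 ≤ Λ * δ := by
      calc (1:ℝ)/2 = Λ * (Λ⁻¹/2) := h1.symm
        _ ≤ Λ * δ := by nlinarith
    nlinarith [sq_nonneg (Real.pi - η)]
  push_neg at hδbig
  -- main case
  set s : ℝ := Λ⁻¹ / 4 with hs_def
  have hs0 : 0 ≤ s := by positivity
  have hqp : dist q p = dist p q := dist_comm q p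
  have hmem1 : s ∈ Set.Icc (0:ℝ) (dist q p) := by
    constructor
    · exact hs0
    · rw [hqp]; nlinarith
  have hmem2 : s ∈ Set.Icc (0:ℝ) (dist q x) := by
    constructor
    · exact hs0
    · nlinarith
  have hmemqp : dist q p ∈ Set.Icc (0:ℝ) (dist q p) := ⟨dist_nonneg, le_refl _⟩
  have hmemqx : dist q x ∈ Set.Icc (0:ℝ) (dist q x) := ⟨dist_nonneg, le_refl _⟩
  -- distances along the geodesics
  have hpa : dist p (γ₁ s) = dist q p - s := by
    have := hiso1 (dist q p) hmemqp s hmem1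
    rw [hγ₁e] at this
    rw [this, abs_of_nonneg (by linarith [hmem1.2])]
  have hbx : dist (γ₂ s) x = dist q x - s := by
    have := hiso2 s hmem2 (dist q x) hmemqx
    rw [hγ₂e] at this
    rw [this, abs_of_nonpos (by linarith [hmem2.2]), neg_sub]
  -- shortcut estimate
  have htri : dist p x ≤ dist p (γ₁ s) + dist (γ₁ s) (γ₂ s) + dist (γ₂ s) x :=
    dist_triangle4 p (γ₁ s) (γ₂ s) x
  have hD : 2 * s - δ ≤ dist (γ₁ s) (γ₂ s) := by
    rw [hpa, hbx] at htri
    linarith [hqp]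
  -- hinge comparison at (s, s)
  have hhs := hhinge s hmem1 s hmem2
  have hΛs : Λ * s = 1/4 := by rw [hs_def]; field_simp
  rw [hΛs] at hhs
  -- monotonicity of cosh
  have hΛD : Λ * (2 * s - δ) = 1/2 - Λ * δ := by rw [hs_def]; field_simp; ring
  have h2sδ : 0 ≤ 2 * s - δ := by rw [hs_def]; nlinarith
  have hmono : Real.cosh (1/2 - Λ * δ) ≤ Real.cosh (Λ * dist (γ₁ s) (γ₂ s)) := by
    rw [← hΛD]
    rw [Real.cosh_le_cosh]
    rw [abs_of_nonneg (by positivity), abs_of_nonneg (by positivity)]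
    nlinarith [dist_nonneg (x := γ₁ s) (y := γ₂ s)]
  have hkey : Real.cosh (1/2 - Λ * δ) ≤
      Real.cosh (1/4) * Real.cosh (1/4) - Real.sinh (1/4) * Real.sinh (1/4) * Real.cos η :=
    le_trans hmono hhs
  -- cosh(1/2) = cosh(1/4)^2 + sinh(1/4)^2
  have hdouble : Real.cosh (1/2) = Real.cosh (1/4) ^ 2 + Real.sinh (1/4) ^ 2 := by
    have : (1:ℝ)/2 = 2 * (1/4) := by norm_num
    rw [this, Real.cosh_two_mul]
  -- cosh(1/2) - cosh(1/2 - Λδ) ≤ 2Λδ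
  have hΛδ0 : 0 ≤ Λ * δ := by positivity
  have hΛδhalf : Λ * δ < 1/2 := by
    calc Λ * δ < Λ * (Λ⁻¹/2) := by nlinarith
      _ = 1/2 := by field_simp
  have hdiff : Real.cosh (1/2) - Real.cosh (1/2 - Λ * δ) ≤ 2 * (Λ * δ) := by
    rw [my_cosh_sub_cosh]
    have harg1 : ((1:ℝ)/2 + (1/2 - Λ * δ))/2 = (1 - Λ * δ)/2 := by ring
    have harg2 : ((1:ℝ)/2 - (1/2 - Λ * δ))/2 = Λ * δ / 2 := by ring
    rw [harg1, harg2]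
    have h1 : Real.sinh ((1 - Λ * δ)/2) ≤ Real.sinh (1/2) := by
      rw [Real.sinh_le_sinh]; linarith
    have h2 : Real.sinh (1/2) ≤ 1 := by
      have := my_sinh_le (1/2) (by norm_num) (by norm_num); linarith
    have h3 : Real.sinh (Λ * δ / 2) ≤ Λ * δ := by
      have := my_sinh_le (Λ * δ / 2) (by positivity) (by linarith); linarith
    have h4 : 0 ≤ Real.sinh (Λ * δ / 2) := (Real.sinh_nonneg_iff.2 (by positivity))
    have h5 : 0 ≤ Real.sinh ((1 - Λ * δ)/2) := (Real.sinh_nonneg_iff.2 (by linarith))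
    nlinarith
  -- key inequality: sinh(1/4)^2 * (1 + cos η) ≤ 2Λδ
  have hA : Real.sinh (1/4) ^ 2 * (1 + Real.cos η) ≤ 2 * (Λ * δ) := by
    nlinarith [hkey, hdiff, hdouble]
  -- Jordan-type inequality: 2(π−η)^2 ≤ π^2 (1 + cos η)
  have hB : 2 * (Real.pi - η) ^ 2 ≤ Real.pi ^ 2 * (1 + Real.cos η) := by
    have hhalf0 : 0 ≤ (Real.pi - η)/2 := by linarith
    have hhalfπ : (Real.pi - η)/2 ≤ Real.pi/2 := by linarith
    have hsin := Real.mul_le_sin hhalf0 hhalfπ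
    have hid : Real.sin ((Real.pi - η)/2) = Real.cos (η/2) := by
      rw [show (Real.pi - η)/2 = Real.pi/2 - η/2 by ring, Real.sin_pi_div_two_sub]
    rw [hid] at hsin
    have hcs : Real.cos (η/2) ^ 2 = 1/2 + Real.cos η / 2 := by
      have := Real.cos_sq (η/2)
      rw [show 2 * (η/2) = η by ring] at this
      exact this
    have hlhs0 : 0 ≤ 2 / Real.pi * ((Real.pi - η)/2) := by positivity
    have hsq : (2 / Real.pi * ((Real.pi - η)/2)) ^ 2 ≤ Real.cos (η/2) ^ 2 :=
      pow_le_pow_left₀ hlhs0 hsin 2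
    rw [hcs] at hsq
    have hπ0 : (0:ℝ) < Real.pi := Real.pi_pos
    have hexp : (2 / Real.pi * ((Real.pi - η)/2)) ^ 2 = (Real.pi - η)^2 / Real.pi ^ 2 := by
      field_simp
    rw [hexp, div_le_iff₀ (by positivity)] at hsq
    nlinarith
  -- sinh(1/4) > 1/4
  have hC : (1:ℝ)/4 < Real.sinh (1/4) := Real.self_lt_sinh_iff.2 (by norm_num)
  have hcosb : 0 ≤ 1 + Real.cos η := by nlinarith [Real.neg_one_le_cos η]
  have h16 : 1 + Real.cos η ≤ 32 * (Λ * δ) := by nlinarith [mul_nonneg (by nlinarith : (0:ℝ) ≤ Real.sinh (1/4)^2 - 1/16) hcosb]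
  have h10 : Real.pi ^ 2 * (1 + Real.cos η) ≤ 10 * (1 + Real.cos η) := by
    nlinarith [hπ2, hcosb]
  linarith [hB, h10, h16]
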